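/- arXiv:2312.14581 — 2 statements merged into one kernel-verified Lean document; each statement's English description precedes it below -/
import Mathlib

section
/- Suppose T is ergodic measure-preserving on (X,A,μ), (A_l) is a sequence of asymptotically rare events with normalized hitting-time distributions converging to a sub-probability distribution function F, i.e. μ(μ(A_l)φ_{A_l} ≤ t) ⇒ F(t). If (k_l) is a sequence of positive integers with μ(A_l)k_l → t > 0 where F' is continuous at t (F' being the non-increasing right-continuous density of F), then μ(φ_{A_l} = k_l) / μ(A_l) → F'(t) as l → ∞. -/
open MeasureTheory Filter Topology
open scoped ENNReal

/-- First hitting time of a set `A` under `T`. -/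
noncomputable def hitTime {X : Type*} (T : X → X) (A : Set X) (x : X) : ℕ∞ :=
  sInf ((↑) '' {n : ℕ | 1 ≤ n ∧ T^[n] x ∈ A})

set_option linter.unusedSectionVars false

section Aux
variable {X : Type*} [MeasurableSpace X] {μ : Measure X} {T : X → X} {A : Set X}

lemma hitTime_le_iff {x : X} {k : ℕ} :
    hitTime T A x ≤ (k : ℕ∞) ↔ ∃ n, 1 ≤ n ∧ n ≤ k ∧ T^[n] x ∈ A := by
  constructor
  · intro h
    by_contra hc
    push_neg at hc
    have h2 : ((k : ℕ∞) + 1) ≤ hitTime T A x := by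
      apply le_sInf
      rintro m ⟨n, ⟨hn1, hnA⟩, rfl⟩
      have hnk : ¬ n ≤ k := fun hle => hc n hn1 hle hnA
      have : k + 1 ≤ n := Nat.succ_le_of_lt (lt_of_not_ge hnk)
      exact_mod_cast this
    have h3 := h2.trans h
    have : ((k:ℕ∞)) < (k:ℕ∞) + 1 :=
      (ENat.lt_add_one_iff (by simp)).mpr le_rfl
    exact absurd h3 (not_le.mpr this)
  · rintro ⟨n, h1, hk, hA⟩
    exact le_trans (sInf_le ⟨n, ⟨h1, hA⟩, rfl⟩) (by exact_mod_cast hk)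

lemma hitTime_ne_zero {x : X} : hitTime T A x ≠ 0 := by
  intro h
  have : ¬ hitTime T A x ≤ (0 : ℕ) := by
    rw [hitTime_le_iff]
    rintro ⟨n, h1, hk, -⟩
    omega
  exact this (by simp [h])


lemma measurableSet_H (hTm : Measurable T) (hA : MeasurableSet A) (k : ℕ) :
    MeasurableSet {x | hitTime T A x ≤ (k : ℕ∞)} := by
  have : {x | hitTime T A x ≤ (k : ℕ∞)} = ⋃ n ∈ Finset.Icc 1 k, T^[n] ⁻¹' A := by
    ext x
    simp only [Set.mem_setOf_eq, hitTime_le_iff, Set.mem_iUnion, Finset.mem_Icc,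
      Set.mem_preimage]
    exact ⟨fun ⟨n, h1, h2, h3⟩ => ⟨n, ⟨h1, h2⟩, h3⟩, fun ⟨n, ⟨h1, h2⟩, h3⟩ => ⟨n, h1, h2, h3⟩⟩
  rw [this]
  exact MeasurableSet.biUnion (Finset.countable_toSet _)
    (fun n _ => (hTm.iterate n) hA)

lemma P_eq_H_diff {k : ℕ} (hk : 1 ≤ k) :
    {x | hitTime T A x = (k : ℕ∞)} =
      {x | hitTime T A x ≤ (k : ℕ∞)} \ {x | hitTime T A x ≤ ((k - 1 : ℕ) : ℕ∞)} := by
  ext x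
  simp only [Set.mem_setOf_eq, Set.mem_diff]
  constructor
  · intro h
    refine ⟨le_of_eq h, ?_⟩
    rw [h]
    intro hle
    have : (k : ℕ) ≤ k - 1 := by exact_mod_cast hle
    omega
  · rintro ⟨h1, h2⟩
    rcases eq_or_ne (hitTime T A x) ⊤ with h | h
    · rw [h] at h1; exact absurd h1 (by simp)
    · lift hitTime T A x to ℕ using h with n hn
      have hn : n ≤ k := by exact_mod_cast h1
      have hn2 : ¬ n ≤ k - 1 := fun hle => h2 (by exact_mod_cast hle)
      congr
      omega


/-- the set of points that do not visit `A` at times `0,...,k-1`. -/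
def notHit (T : X → X) (A : Set X) (k : ℕ) : Set X := {x | ∀ j < k, T^[j] x ∉ A}

lemma measurableSet_N (hTm : Measurable T) (hA : MeasurableSet A) (k : ℕ) :
    MeasurableSet (notHit T A k) := by
  have : notHit T A k = ⋂ j ∈ Finset.range k, (T^[j] ⁻¹' A)ᶜ := by
    ext x; simp [notHit]
  rw [this]
  exact MeasurableSet.biInter (Finset.countable_toSet _)
    (fun j _ => ((hTm.iterate j) hA).compl)

lemma N_succ_subset (k : ℕ) : notHit T A (k + 1) ⊆ notHit T A k :=
  fun x hx j hj => hx j (by omega)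

lemma gt_eq_preimage (k : ℕ) :
    {x | (k : ℕ∞) < hitTime T A x} = T ⁻¹' (notHit T A k) := by
  ext x
  simp only [Set.mem_setOf_eq, Set.mem_preimage, notHit]
  rw [← not_le, hitTime_le_iff]
  push_neg
  constructor
  · intro h j hj
    have := h (j + 1) (by omega) (by omega)
    rwa [Function.iterate_succ_apply] at this
  · intro h n h1 hk
    have := h (n - 1) (by omega)
    rw [← Function.iterate_succ_apply] at this
    have hne : n - 1 + 1 = n := by omega
    rwa [Nat.succ_eq_add_one, hne] at this

lemma meas_gt (hT : MeasurePreserving T μ μ) (hA : MeasurableSet A) (k : ℕ) :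
    μ {x | (k : ℕ∞) < hitTime T A x} = μ (notHit T A k) := by
  rw [gt_eq_preimage, hT.measure_preimage (measurableSet_N hT.measurable hA k).nullMeasurableSet]

lemma gt_split (k : ℕ) :
    {x | (k : ℕ∞) < hitTime T A x} =
      {x | hitTime T A x = ((k+1 : ℕ) : ℕ∞)} ∪ {x | ((k+1 : ℕ) : ℕ∞) < hitTime T A x} := by
  ext x
  simp only [Set.mem_setOf_eq, Set.mem_union]
  constructor
  · intro h
    rcases lt_or_ge ((k+1 : ℕ) : ℕ∞) (hitTime T A x) with h2 | h2
    · exact Or.inr h2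
    · left
      rcases eq_or_ne (hitTime T A x) ⊤ with htop | htop
      · rw [htop] at h2
        have : ((k+1 : ℕ) : ℕ∞) ≠ ⊤ := ENat.coe_ne_top (k+1)
        exact absurd (top_le_iff.mp h2) this
      · lift hitTime T A x to ℕ using htop with n hn
        have : k < n := by exact_mod_cast h
        have : n ≤ k + 1 := by exact_mod_cast h2
        congr; omega
  · rintro (h | h)
    · rw [h]; exact_mod_cast Nat.lt_succ_self k
    · exact lt_trans (by exact_mod_cast Nat.lt_succ_self k) h


lemma measurableSet_gt (hTm : Measurable T) (hA : MeasurableSet A) (k : ℕ) :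
    MeasurableSet {x | (k : ℕ∞) < hitTime T A x} := by
  have : {x | (k : ℕ∞) < hitTime T A x} = {x | hitTime T A x ≤ (k : ℕ∞)}ᶜ := by
    ext x; simp [not_le]
  rw [this]
  exact (measurableSet_H hTm hA k).compl

lemma measurableSet_P (hTm : Measurable T) (hA : MeasurableSet A) {k : ℕ} (hk : 1 ≤ k) :
    MeasurableSet {x | hitTime T A x = (k : ℕ∞)} := by
  rw [P_eq_H_diff hk]
  exact (measurableSet_H hTm hA k).diff (measurableSet_H hTm hA (k-1))

lemma meas_split (hTm : Measurable T) (hA : MeasurableSet A) (k : ℕ) :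
    μ {x | (k : ℕ∞) < hitTime T A x} =
      μ {x | hitTime T A x = ((k+1 : ℕ) : ℕ∞)} + μ {x | ((k+1 : ℕ) : ℕ∞) < hitTime T A x} := by
  rw [gt_split]
  refine measure_union ?_ (measurableSet_gt hTm hA (k+1))
  rw [Set.disjoint_left]
  intro x hx hx2
  simp only [Set.mem_setOf_eq] at hx hx2
  rw [hx] at hx2
  exact lt_irrefl _ hx2

lemma meas_N_split (hTm : Measurable T) (hA : MeasurableSet A) (k : ℕ) :
    μ (notHit T A k) = μ (notHit T A k \ notHit T A (k+1)) + μ (notHit T A (k+1)) := by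
  conv_lhs => rw [← Set.diff_union_of_subset (N_succ_subset k)]
  exact measure_union Set.disjoint_sdiff_left (measurableSet_N hTm hA (k+1))

lemma meas_P_eq_diff [IsFiniteMeasure μ] (hT : MeasurePreserving T μ μ) (hA : MeasurableSet A)
    (k : ℕ) :
    μ {x | hitTime T A x = ((k+1 : ℕ) : ℕ∞)} = μ (notHit T A k \ notHit T A (k+1)) := by
  have h1 := meas_split (μ := μ) hT.measurable hA k
  rw [meas_gt hT hA k, meas_gt hT hA (k+1), meas_N_split hT.measurable hA k] at h1
  exact (ENNReal.add_left_inj (measure_ne_top μ _)).mp h1.symm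

lemma diff_subset_preimage (k : ℕ) :
    notHit T A (k+1) \ notHit T A (k+2) ⊆ T ⁻¹' (notHit T A k \ notHit T A (k+1)) := by
  rintro x ⟨hx1, hx2⟩
  have hkA : T^[k+1] x ∈ A := by
    by_contra hA'
    refine hx2 (fun j hj => ?_)
    rcases Nat.lt_or_ge j (k+1) with h | h
    · exact hx1 j h
    · have hj' : j = k+1 := by omega
      rwa [hj']
  refine ⟨fun j hj => ?_, fun hmem => ?_⟩
  · have := hx1 (j+1) (by omega)
    rwa [Function.iterate_succ_apply] at this
  · have h2 := hmem k (by omega)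
    rw [← Function.iterate_succ_apply] at h2
    exact h2 (by rwa [Nat.succ_eq_add_one])

lemma meas_P_decr [IsFiniteMeasure μ] (hT : MeasurePreserving T μ μ) (hA : MeasurableSet A)
    (k : ℕ) :
    μ {x | hitTime T A x = ((k+2 : ℕ) : ℕ∞)} ≤ μ {x | hitTime T A x = ((k+1 : ℕ) : ℕ∞)} := by
  rw [meas_P_eq_diff hT hA k, show (k+2) = (k+1)+1 from rfl, meas_P_eq_diff hT hA (k+1)]
  calc μ (notHit T A (k+1) \ notHit T A (k+2))
      ≤ μ (T ⁻¹' (notHit T A k \ notHit T A (k+1))) := measure_mono (diff_subset_preimage k)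
    _ = μ (notHit T A k \ notHit T A (k+1)) := hT.measure_preimage
        (((measurableSet_N hT.measurable hA k).diff
          (measurableSet_N hT.measurable hA (k+1))).nullMeasurableSet)

lemma meas_P_anti [IsFiniteMeasure μ] (hT : MeasurePreserving T μ μ) (hA : MeasurableSet A)
    {i j : ℕ} (hi : 1 ≤ i) (hij : i ≤ j) :
    μ {x | hitTime T A x = (j : ℕ∞)} ≤ μ {x | hitTime T A x = (i : ℕ∞)} := by
  induction j with
  | zero => omega
  | succ n ih =>
    rcases Nat.lt_or_ge i (n+1) with h | h
    · have hn : 1 ≤ n := by omega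
      refine le_trans ?_ (ih (by omega))
      obtain ⟨m, rfl⟩ : ∃ m, n = m + 1 := ⟨n - 1, by omega⟩
      exact meas_P_decr hT hA m
    · have : i = n + 1 := by omega
      rw [this]


lemma H_mono {a b : ℕ} (hab : a ≤ b) :
    {x | hitTime T A x ≤ (a : ℕ∞)} ⊆ {x | hitTime T A x ≤ (b : ℕ∞)} :=
  fun x hx => le_trans hx (by exact_mod_cast hab : (a : ℕ∞) ≤ b)

lemma meas_H_step (hTm : Measurable T) (hA : MeasurableSet A) (j : ℕ) :
    μ {x | hitTime T A x ≤ ((j+1 : ℕ) : ℕ∞)} =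
      μ {x | hitTime T A x ≤ (j : ℕ∞)} + μ {x | hitTime T A x = ((j+1 : ℕ) : ℕ∞)} := by
  have hd := P_eq_H_diff (T := T) (A := A) (k := j+1) (by omega)
  have hsub : {x | hitTime T A x ≤ (j : ℕ∞)} ⊆ {x | hitTime T A x ≤ ((j+1 : ℕ) : ℕ∞)} :=
    H_mono (by omega)
  have hsimp : (j + 1 - 1 : ℕ) = j := by omega
  rw [hsimp] at hd
  have hunion : {x | hitTime T A x ≤ ((j+1 : ℕ) : ℕ∞)} =
      {x | hitTime T A x ≤ (j : ℕ∞)} ∪ {x | hitTime T A x = ((j+1 : ℕ) : ℕ∞)} := by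
    rw [hd, Set.union_diff_cancel hsub]
  rw [hunion]
  refine measure_union ?_ (measurableSet_P hTm hA (by omega))
  rw [hd]
  exact Set.disjoint_sdiff_right

lemma meas_H_sum (hTm : Measurable T) (hA : MeasurableSet A) {a b : ℕ} (hab : a ≤ b) :
    μ {x | hitTime T A x ≤ (b : ℕ∞)} =
      μ {x | hitTime T A x ≤ (a : ℕ∞)} +
        ∑ j ∈ Finset.Ioc a b, μ {x | hitTime T A x = (j : ℕ∞)} := by
  induction b with
  | zero =>
    have : a = 0 := by omega
    subst this
    simp
  | succ n ih =>
    rcases Nat.lt_or_ge a (n+1) with h | h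
    · have han : a ≤ n := by omega
      rw [meas_H_step hTm hA n, ih han,
        show Finset.Ioc a (n+1) = insert (n+1) (Finset.Ioc a n) by
          ext j
          simp only [Finset.mem_Ioc, Finset.mem_insert]
          omega,
        Finset.sum_insert (by simp)]
      ring
    · have : a = n + 1 := by omega
      subst this
      simp

lemma sandwich_upper [IsFiniteMeasure μ] (hT : MeasurePreserving T μ μ) (hA : MeasurableSet A)
    {k m : ℕ} (hm : m ≤ k) (hk : 1 ≤ k) :
    μ {x | hitTime T A x ≤ ((k - m : ℕ) : ℕ∞)} + (m : ℝ≥0∞) * μ {x | hitTime T A x = (k : ℕ∞)}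
      ≤ μ {x | hitTime T A x ≤ (k : ℕ∞)} := by
  rw [meas_H_sum hT.measurable hA (Nat.sub_le k m)]
  refine add_le_add_right ?_ _
  calc (m : ℝ≥0∞) * μ {x | hitTime T A x = (k : ℕ∞)}
      = (Finset.Ioc (k - m) k).card • μ {x | hitTime T A x = (k : ℕ∞)} := by
        rw [Nat.card_Ioc, nsmul_eq_mul]
        congr 2
        omega
    _ ≤ ∑ j ∈ Finset.Ioc (k - m) k, μ {x | hitTime T A x = (j : ℕ∞)} := by
        refine Finset.card_nsmul_le_sum _ _ _ (fun j hj => ?_)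
        rw [Finset.mem_Ioc] at hj
        exact meas_P_anti hT hA (by omega) hj.2

lemma sandwich_lower [IsFiniteMeasure μ] (hT : MeasurePreserving T μ μ) (hA : MeasurableSet A)
    {k m : ℕ} (hk : 1 ≤ k) :
    μ {x | hitTime T A x ≤ ((k + m : ℕ) : ℕ∞)}
      ≤ μ {x | hitTime T A x ≤ (k : ℕ∞)} + (m : ℝ≥0∞) * μ {x | hitTime T A x = (k : ℕ∞)} := by
  rw [meas_H_sum hT.measurable hA (Nat.le_add_right k m)]
  refine add_le_add_right ?_ _
  calc ∑ j ∈ Finset.Ioc k (k + m), μ {x | hitTime T A x = (j : ℕ∞)}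
      ≤ (Finset.Ioc k (k+m)).card • μ {x | hitTime T A x = (k : ℕ∞)} := by
        refine Finset.sum_le_card_nsmul _ _ _ (fun j hj => ?_)
        rw [Finset.mem_Ioc] at hj
        exact meas_P_anti hT hA hk (le_of_lt hj.1)
    _ = (m : ℝ≥0∞) * μ {x | hitTime T A x = (k : ℕ∞)} := by
        rw [Nat.card_Ioc, nsmul_eq_mul]
        congr 2
        omega

end Aux

section RealAnalysis
variable {F F' : ℝ → ℝ}

lemma F'_intble (hF'anti : AntitoneOn F' (Set.Ici 0)) {a b : ℝ} (ha : 0 ≤ a) (hab : a ≤ b) :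
    IntervalIntegrable F' MeasureTheory.volume a b := by
  refine (hF'anti.mono ?_).intervalIntegrable
  rw [Set.uIcc_of_le hab]
  exact fun x hx => le_trans ha hx.1

lemma F_diff (hF'anti : AntitoneOn F' (Set.Ici 0))
    (hdens : ∀ t : ℝ, 0 ≤ t → F t = ∫ s in (0:ℝ)..t, F' s)
    {a b : ℝ} (ha : 0 ≤ a) (hab : a ≤ b) :
    F b - F a = ∫ s in a..b, F' s := by
  rw [hdens a ha, hdens b (le_trans ha hab),
    ← intervalIntegral.integral_add_adjacent_intervals
      (F'_intble hF'anti le_rfl ha) (F'_intble hF'anti ha hab)]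
  ring

lemma F_diff_le (hF'anti : AntitoneOn F' (Set.Ici 0))
    (hdens : ∀ t : ℝ, 0 ≤ t → F t = ∫ s in (0:ℝ)..t, F' s)
    {a b : ℝ} (ha : 0 ≤ a) (hab : a ≤ b) :
    F b - F a ≤ F' a * (b - a) := by
  rw [F_diff hF'anti hdens ha hab]
  calc ∫ s in a..b, F' s ≤ ∫ _ in a..b, F' a := by
        refine intervalIntegral.integral_mono_on hab (F'_intble hF'anti ha hab)
          intervalIntegrable_const (fun x hx => hF'anti ha (le_trans ha hx.1) hx.1)
    _ = F' a * (b - a) := by rw [intervalIntegral.integral_const, smul_eq_mul]; ring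

lemma F_diff_ge (hF'anti : AntitoneOn F' (Set.Ici 0))
    (hdens : ∀ t : ℝ, 0 ≤ t → F t = ∫ s in (0:ℝ)..t, F' s)
    {a b : ℝ} (ha : 0 ≤ a) (hab : a ≤ b) :
    F' b * (b - a) ≤ F b - F a := by
  rw [F_diff hF'anti hdens ha hab]
  calc F' b * (b - a) = ∫ _ in a..b, F' b := by rw [intervalIntegral.integral_const, smul_eq_mul]; ring
    _ ≤ ∫ s in a..b, F' s := by
        refine intervalIntegral.integral_mono_on hab intervalIntegrable_const
          (F'_intble hF'anti ha hab)
          (fun x hx => hF'anti (le_trans ha hx.1) (le_trans ha (le_trans hx.1 hx.2)) hx.2)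

lemma F_contAt (hF'anti : AntitoneOn F' (Set.Ici 0))
    (hdens : ∀ t : ℝ, 0 ≤ t → F t = ∫ s in (0:ℝ)..t, F' s)
    {s : ℝ} (hs : 0 < s) : ContinuousAt F s := by
  have hint : IntegrableOn F' (Set.uIcc 0 (s+1)) MeasureTheory.volume := by
    have := F'_intble hF'anti (le_refl 0) (by linarith : (0:ℝ) ≤ s + 1)
    rwa [intervalIntegrable_iff_integrableOn_Icc_of_le (by linarith), ← Set.uIcc_of_le
      (by linarith : (0:ℝ) ≤ s + 1)] at this
  have hcont := intervalIntegral.continuousOn_primitive_interval hint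
  have hmem : Set.uIcc 0 (s+1) ∈ 𝓝 s := by
    rw [Set.uIcc_of_le (by linarith : (0:ℝ) ≤ s + 1)]
    exact Icc_mem_nhds hs (by linarith)
  have hca : ContinuousAt (fun u => ∫ x in (0:ℝ)..u, F' x) s :=
    hcont.continuousAt hmem
  refine hca.congr ?_
  filter_upwards [hmem] with u hu
  rw [Set.uIcc_of_le (by linarith : (0:ℝ) ≤ s + 1)] at hu
  exact (hdens u hu.1).symm

end RealAnalysis

section Distrib
variable {X : Type*} [MeasurableSpace X] {T : X → X}

lemma subset_of_ofReal_le {A : Set X} {c : ℝ≥0∞} (hc0 : c ≠ 0) (hctop : c ≠ ⊤) {s : ℝ} {n : ℕ}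
    (h : ENNReal.ofReal s ≤ c * n) :
    {x | c * ((hitTime T A x : ℕ∞) : ℝ≥0∞) ≤ ENNReal.ofReal s} ⊆
      {x | hitTime T A x ≤ (n : ℕ∞)} := by
  intro x hx
  simp only [Set.mem_setOf_eq] at hx ⊢
  have h2 : c * ((hitTime T A x : ℕ∞) : ℝ≥0∞) ≤ c * ((n : ℕ∞) : ℝ≥0∞) := by
    rw [ENat.toENNReal_coe]
    exact le_trans hx h
  exact ENat.toENNReal_le.mp (ENNReal.mul_le_mul_iff_right hc0 hctop |>.mp h2)

lemma subset_of_le_ofReal {A : Set X} {c : ℝ≥0∞} {s : ℝ} {n : ℕ}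
    (h : c * n ≤ ENNReal.ofReal s) :
    {x | hitTime T A x ≤ (n : ℕ∞)} ⊆
      {x | c * ((hitTime T A x : ℕ∞) : ℝ≥0∞) ≤ ENNReal.ofReal s} := by
  intro x hx
  simp only [Set.mem_setOf_eq] at hx ⊢
  refine le_trans ?_ h
  rw [← ENat.toENNReal_coe (n := n)]
  exact mul_le_mul_right (ENat.toENNReal_le.mpr hx) c

lemma G_tendsto {μ : MeasureTheory.Measure X} [IsProbabilityMeasure μ] {A : ℕ → Set X}
    (hpos : ∀ l, 0 < μ (A l))
    {F : ℝ → ℝ}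
    (hcvg : ∀ t : ℝ, ContinuousAt F t →
      Tendsto (fun l =>
          (μ {x | μ (A l) * ((hitTime T (A l) x : ℕ∞) : ℝ≥0∞) ≤ ENNReal.ofReal t}).toReal)
        atTop (𝓝 (F t)))
    (hFc : ∀ u : ℝ, 0 < u → ContinuousAt F u)
    {n : ℕ → ℕ} {s : ℝ} (hs : 0 < s)
    (hns : Tendsto (fun l => (μ (A l)).toReal * (n l : ℝ)) atTop (𝓝 s)) :
    Tendsto (fun l => (μ {x | hitTime T (A l) x ≤ (n l : ℕ∞)}).toReal) atTop (𝓝 (F s)) := by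
  rw [Metric.tendsto_nhds]
  intro δ hδ
  obtain ⟨r, hr, hball⟩ := Metric.continuousAt_iff.mp (hFc s hs) (δ/2) (by linarith)
  set s₁ := max (s/2) (s - r/2) with hs₁def
  set s₂ := s + r/2 with hs₂def
  have hs₁pos : 0 < s₁ := lt_max_of_lt_left (by linarith)
  have hs₁lt : s₁ < s := max_lt (by linarith) (by linarith)
  have hs₂gt : s < s₂ := by simp only [hs₂def]; linarith
  have h1 : |F s₁ - F s| < δ/2 := by
    have : dist s₁ s < r := by
      rw [Real.dist_eq, abs_lt]
      constructor
      · have : s - r/2 ≤ s₁ := le_max_right _ _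
        linarith
      · linarith
    simpa [Real.dist_eq] using hball this
  have h2 : |F s₂ - F s| < δ/2 := by
    have : dist s₂ s < r := by
      rw [Real.dist_eq, abs_lt]
      constructor <;> simp only [hs₂def] <;> linarith
    simpa [Real.dist_eq] using hball this
  have Ev1 := Metric.tendsto_nhds.mp (hcvg s₁ (hFc _ hs₁pos)) (δ/2) (by linarith)
  have Ev2 := Metric.tendsto_nhds.mp (hcvg s₂ (hFc _ (lt_trans hs hs₂gt))) (δ/2) (by linarith)
  have Ev3 : ∀ᶠ l in atTop, (μ (A l)).toReal * (n l : ℝ) ∈ Set.Ioo s₁ s₂ :=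
    hns (Ioo_mem_nhds hs₁lt hs₂gt)
  filter_upwards [Ev1, Ev2, Ev3] with l e1 e2 e3
  have hfin : μ (A l) * (n l : ℝ≥0∞) ≠ ⊤ :=
    ENNReal.mul_ne_top (measure_ne_top μ _) (ENNReal.natCast_ne_top _)
  have htr : (μ (A l) * (n l : ℝ≥0∞)).toReal = (μ (A l)).toReal * (n l : ℝ) := by
    simp [ENNReal.toReal_mul]
  have hlow : ENNReal.ofReal s₁ ≤ μ (A l) * (n l : ℝ≥0∞) :=
    ENNReal.ofReal_le_of_le_toReal (by rw [htr]; exact le_of_lt e3.1)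
  have hup : μ (A l) * (n l : ℝ≥0∞) ≤ ENNReal.ofReal s₂ :=
    (ENNReal.le_ofReal_iff_toReal_le hfin (by linarith : (0:ℝ) ≤ s₂)).mpr
      (by rw [htr]; exact le_of_lt e3.2)
  have hc0 : μ (A l) ≠ 0 := (hpos l).ne'
  have incl1 := subset_of_ofReal_le (T := T) (A := A l) hc0 (measure_ne_top μ _) hlow
  have incl2 := subset_of_le_ofReal (T := T) (A := A l) (c := μ (A l)) hup
  have hG1 : (μ {x | μ (A l) * ((hitTime T (A l) x : ℕ∞) : ℝ≥0∞) ≤ ENNReal.ofReal s₁}).toReal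
      ≤ (μ {x | hitTime T (A l) x ≤ ((n l : ℕ) : ℕ∞)}).toReal :=
    ENNReal.toReal_mono (measure_ne_top μ _) (measure_mono incl1)
  have hG2 : (μ {x | hitTime T (A l) x ≤ ((n l : ℕ) : ℕ∞)}).toReal
      ≤ (μ {x | μ (A l) * ((hitTime T (A l) x : ℕ∞) : ℝ≥0∞) ≤ ENNReal.ofReal s₂}).toReal :=
    ENNReal.toReal_mono (measure_ne_top μ _) (measure_mono incl2)
  rw [Real.dist_eq] at e1 e2 ⊢
  rw [abs_lt] at e1 e2 h1 h2 ⊢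
  constructor
  · have := e1.1
    linarith [hG1]
  · have := e2.2
    linarith [hG2]

end Distrib

/-- Automatic local limit theorem for hitting times: if the normalized hitting times of the
asymptotically rare events `A l` converge in distribution to a sub-probability distribution
function `F` (with non-increasing right-continuous density `F'`), and `μ(A l)·k l → t > 0`
with `F'` continuous at `t`, then `μ(φ_{A l} = k l) / μ(A l) → F'(t)`. -/
theorem stmt_6 {X : Type*} [MeasurableSpace X] {μ : Measure X} [IsProbabilityMeasure μ]
    {T : X → X} (hT : Ergodic T μ) {A : ℕ → Set X} (hmeas : ∀ l, MeasurableSet (A l))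
    (hpos : ∀ l, 0 < μ (A l)) (hrare : Tendsto (fun l => μ (A l)) atTop (𝓝 0))
    {F F' : ℝ → ℝ}
    (hcvg : ∀ t : ℝ, ContinuousAt F t →
      Tendsto (fun l =>
          (μ {x | μ (A l) * ((hitTime T (A l) x : ℕ∞) : ℝ≥0∞) ≤ ENNReal.ofReal t}).toReal)
        atTop (𝓝 (F t)))
    (hF'anti : AntitoneOn F' (Set.Ici 0))
    (hF'rc : ∀ t : ℝ, 0 ≤ t → ContinuousWithinAt F' (Set.Ici t) t)
    (hdens : ∀ t : ℝ, 0 ≤ t → F t = ∫ s in (0:ℝ)..t, F' s)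
    {k : ℕ → ℕ} (hk1 : ∀ l, 1 ≤ k l) {t : ℝ} (ht : 0 < t)
    (hkt : Tendsto (fun l => (μ (A l)).toReal * (k l : ℝ)) atTop (𝓝 t))
    (hF'cont : ContinuousAt F' t) :
    Tendsto (fun l => (μ {x | hitTime T (A l) x = (k l : ℕ∞)}).toReal / (μ (A l)).toReal)
      atTop (𝓝 (F' t)) := by
  have hTm : MeasurePreserving T μ μ := hT.toMeasurePreserving
  have hFc : ∀ u : ℝ, 0 < u → ContinuousAt F u := fun u hu => F_contAt hF'anti hdens hu
  have hcpos : ∀ l, 0 < (μ (A l)).toReal :=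
    fun l => ENNReal.toReal_pos (hpos l).ne' (measure_ne_top μ _)
  have hrareR : Tendsto (fun l => (μ (A l)).toReal) atTop (𝓝 0) := by
    have := (ENNReal.tendsto_toReal ENNReal.zero_ne_top).comp hrare
    simpa [Function.comp_def] using this
  -- k l → ∞
  have hk_inf : Tendsto (fun l => (k l : ℝ)) atTop atTop := by
    have h1 : Tendsto (fun l => (μ (A l)).toReal) atTop (𝓝[>] 0) := by
      rw [tendsto_nhdsWithin_iff]
      exact ⟨hrareR, Eventually.of_forall (fun l => hcpos l)⟩
    have h2 : Tendsto (fun l => ((μ (A l)).toReal)⁻¹) atTop atTop := h1.inv_tendsto_nhdsGT_zero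
    have h3 : Tendsto (fun l => ((μ (A l)).toReal * (k l : ℝ)) * ((μ (A l)).toReal)⁻¹)
        atTop atTop := Filter.Tendsto.atTop_mul_pos ht h2 hkt |>.congr (fun l => mul_comm _ _)
    refine h3.congr (fun l => ?_)
    rw [mul_comm ((μ (A l)).toReal) ((k l : ℝ)), mul_assoc,
      mul_inv_cancel₀ (ne_of_gt (hcpos l)), mul_one]
  rw [Metric.tendsto_nhds]
  intro δ hδ
  obtain ⟨r, hr, hball⟩ := Metric.continuousAt_iff.mp hF'cont (δ/3) (by linarith)
  set ε := min (1/2 : ℝ) (r / (2 * t)) with hεdef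
  have hε0 : 0 < ε := lt_min (by norm_num) (div_pos hr (by positivity))
  have hε1 : ε ≤ 1/2 := min_le_left _ _
  have hεr : ε * t ≤ r/2 := by
    have h := min_le_right (1/2 : ℝ) (r / (2 * t))
    rw [← hεdef] at h
    calc ε * t ≤ r/(2*t) * t := by nlinarith
      _ = r/2 := by field_simp
  have hεt : 0 < ε * t := by positivity
  set m : ℕ → ℕ := fun l => ⌈ε * (k l : ℝ)⌉₊ with hmdef
  have hm1 : ∀ l, 0 < m l := fun l =>
    Nat.ceil_pos.mpr (mul_pos hε0 (by exact_mod_cast hk1 l))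
  have hm_lb : ∀ l, ε * (k l : ℝ) ≤ (m l : ℝ) := fun l => Nat.le_ceil _
  have hm_ub : ∀ l, (m l : ℝ) ≤ ε * (k l : ℝ) + 1 :=
    fun l => le_of_lt (Nat.ceil_lt_add_one (by positivity))
  -- c1 : μ(A l).toReal * m l → ε t
  have c1 : Tendsto (fun l => (μ (A l)).toReal * (m l : ℝ)) atTop (𝓝 (ε * t)) := by
    refine tendsto_of_tendsto_of_tendsto_of_le_of_le
      (g := fun l => ε * ((μ (A l)).toReal * (k l : ℝ)))
      (h := fun l => ε * ((μ (A l)).toReal * (k l : ℝ)) + (μ (A l)).toReal)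
      (hkt.const_mul ε) (by simpa using (hkt.const_mul ε).add hrareR) ?_ ?_
    · intro l
      have h := mul_le_mul_of_nonneg_left (hm_lb l) (le_of_lt (hcpos l))
      show ε * ((μ (A l)).toReal * (k l : ℝ)) ≤ (μ (A l)).toReal * (m l : ℝ)
      have e : ε * ((μ (A l)).toReal * (k l : ℝ)) =
          (μ (A l)).toReal * (ε * (k l : ℝ)) := by ring
      rw [e]; exact h
    · intro l
      have h := mul_le_mul_of_nonneg_left (hm_ub l) (le_of_lt (hcpos l))
      show (μ (A l)).toReal * (m l : ℝ) ≤ ε * ((μ (A l)).toReal * (k l : ℝ)) + (μ (A l)).toReal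
      have e : ε * ((μ (A l)).toReal * (k l : ℝ)) + (μ (A l)).toReal =
          (μ (A l)).toReal * (ε * (k l : ℝ) + 1) := by ring
      rw [e]; exact h
  -- eventually m l < k l
  have Evm : ∀ᶠ l in atTop, m l < k l := by
    filter_upwards [hk_inf.eventually_ge_atTop (2/(1-ε))] with l hl
    have hεlt : (0:ℝ) < 1 - ε := by linarith
    have h2 : 2 ≤ (k l : ℝ) * (1 - ε) := (div_le_iff₀ hεlt).mp hl
    have : (m l : ℝ) < (k l : ℝ) := by
      have := hm_ub l
      nlinarith
    exact_mod_cast this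
  -- c2 : μ * (k - m) → t(1-ε)
  have c2 : Tendsto (fun l => (μ (A l)).toReal * ((k l - m l : ℕ) : ℝ)) atTop
      (𝓝 (t * (1 - ε))) := by
    have base : Tendsto (fun l => (μ (A l)).toReal * (k l : ℝ)
        - (μ (A l)).toReal * (m l : ℝ)) atTop (𝓝 (t * (1 - ε))) := by
      have := hkt.sub c1
      have heq : t - ε * t = t * (1 - ε) := by ring
      rwa [heq] at this
    refine Tendsto.congr' ?_ base
    filter_upwards [Evm] with l hl
    rw [Nat.cast_sub hl.le]
    ring
  -- c3 : μ * (k + m) → t(1+ε)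
  have c3 : Tendsto (fun l => (μ (A l)).toReal * ((k l + m l : ℕ) : ℝ)) atTop
      (𝓝 (t * (1 + ε))) := by
    have := hkt.add c1
    have heq : t + ε * t = t * (1 + ε) := by ring
    rw [heq] at this
    refine this.congr (fun l => ?_)
    push_cast
    ring
  have Gm := G_tendsto hpos hcvg hFc (n := fun l => k l - m l)
    (s := t * (1 - ε)) (by nlinarith) c2
  have Gk := G_tendsto hpos hcvg hFc (n := k) (s := t) ht hkt
  have Gp := G_tendsto hpos hcvg hFc (n := fun l => k l + m l)
    (s := t * (1 + ε)) (by nlinarith) c3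
  -- limits of the sandwich bounds
  set up : ℕ → ℝ := fun l =>
    ((μ {x | hitTime T (A l) x ≤ ((k l : ℕ) : ℕ∞)}).toReal
      - (μ {x | hitTime T (A l) x ≤ ((k l - m l : ℕ) : ℕ∞)}).toReal)
      / ((μ (A l)).toReal * (m l : ℝ)) with hupdef
  set lo : ℕ → ℝ := fun l =>
    ((μ {x | hitTime T (A l) x ≤ ((k l + m l : ℕ) : ℕ∞)}).toReal
      - (μ {x | hitTime T (A l) x ≤ ((k l : ℕ) : ℕ∞)}).toReal)
      / ((μ (A l)).toReal * (m l : ℝ)) with hlodef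
  have Ulim : Tendsto up atTop (𝓝 ((F t - F (t * (1 - ε))) / (ε * t))) :=
    (Gk.sub Gm).div c1 (ne_of_gt hεt)
  have Llim : Tendsto lo atTop (𝓝 ((F (t * (1 + ε)) - F t) / (ε * t))) :=
    (Gp.sub Gk).div c1 (ne_of_gt hεt)
  -- bounds on the limits
  have hdist1 : |F' (t * (1 - ε)) - F' t| < δ/3 := by
    have : dist (t * (1 - ε)) t < r := by
      rw [Real.dist_eq, abs_lt]
      constructor <;> nlinarith
    simpa [Real.dist_eq] using hball this
  have hdist2 : |F' (t * (1 + ε)) - F' t| < δ/3 := by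
    have : dist (t * (1 + ε)) t < r := by
      rw [Real.dist_eq, abs_lt]
      constructor <;> nlinarith
    simpa [Real.dist_eq] using hball this
  have hUbound : (F t - F (t * (1 - ε))) / (ε * t) < F' t + δ := by
    have h1 : F t - F (t * (1 - ε)) ≤ F' (t * (1 - ε)) * (t - t * (1 - ε)) :=
      F_diff_le hF'anti hdens (by nlinarith) (by nlinarith)
    have h2 : t - t * (1 - ε) = ε * t := by ring
    rw [h2] at h1
    rw [div_lt_iff₀ hεt]
    rw [abs_lt] at hdist1
    nlinarith [hdist1.2]
  have hLbound : F' t - δ < (F (t * (1 + ε)) - F t) / (ε * t) := by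
    have h1 : F' (t * (1 + ε)) * (t * (1 + ε) - t) ≤ F (t * (1 + ε)) - F t :=
      F_diff_ge hF'anti hdens (le_of_lt ht) (by nlinarith)
    have h2 : t * (1 + ε) - t = ε * t := by ring
    rw [h2] at h1
    rw [lt_div_iff₀ hεt]
    rw [abs_lt] at hdist2
    nlinarith [hdist2.1]
  -- eventual sandwich inequalities
  have Ev_up : ∀ᶠ l in atTop,
      (μ {x | hitTime T (A l) x = ((k l : ℕ) : ℕ∞)}).toReal / (μ (A l)).toReal ≤ up l := by
    filter_upwards [Evm] with l hl
    have hsand := sandwich_upper (μ := μ) hTm (hmeas l) hl.le (hk1 l)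
    have htR := ENNReal.toReal_mono (measure_ne_top μ _) hsand
    rw [ENNReal.toReal_add (measure_ne_top μ _)
      (ENNReal.mul_ne_top (ENNReal.natCast_ne_top _) (measure_ne_top μ _)),
      ENNReal.toReal_mul] at htR
    simp only [ENNReal.toReal_natCast] at htR
    rw [hupdef]
    set a := (μ {x | hitTime T (A l) x = ((k l : ℕ) : ℕ∞)}).toReal with ha
    set c := (μ (A l)).toReal
    rw [div_le_div_iff₀ (hcpos l) (mul_pos (hcpos l) (by exact_mod_cast hm1 l) : (0:ℝ) < c * (m l : ℝ))]
    have hanneg : 0 ≤ a := ENNReal.toReal_nonneg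
    nlinarith [htR, hcpos l]
  have Ev_lo : ∀ᶠ l in atTop, lo l ≤
      (μ {x | hitTime T (A l) x = ((k l : ℕ) : ℕ∞)}).toReal / (μ (A l)).toReal := by
    filter_upwards [] with l
    have hsand := sandwich_lower (μ := μ) (m := m l) hTm (hmeas l) (hk1 l)
    have htR := ENNReal.toReal_mono
      (by exact ENNReal.add_ne_top.mpr ⟨measure_ne_top μ _,
        ENNReal.mul_ne_top (ENNReal.natCast_ne_top _) (measure_ne_top μ _)⟩) hsand
    rw [ENNReal.toReal_add (measure_ne_top μ _)
      (ENNReal.mul_ne_top (ENNReal.natCast_ne_top _) (measure_ne_top μ _)),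
      ENNReal.toReal_mul] at htR
    simp only [ENNReal.toReal_natCast] at htR
    rw [hlodef]
    set a := (μ {x | hitTime T (A l) x = ((k l : ℕ) : ℕ∞)}).toReal with ha
    set c := (μ (A l)).toReal
    rw [div_le_div_iff₀ (mul_pos (hcpos l) (by exact_mod_cast hm1 l) : (0:ℝ) < c * (m l : ℝ)) (hcpos l)]
    nlinarith [htR, hcpos l]
  have Ev2 : ∀ᶠ l in atTop, up l < F' t + δ :=
    (tendsto_order.1 Ulim).2 _ hUbound
  have Ev3 : ∀ᶠ l in atTop, F' t - δ < lo l :=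
    (tendsto_order.1 Llim).1 _ hLbound
  filter_upwards [Ev_up, Ev_lo, Ev2, Ev3] with l e1 e2 e3 e4
  rw [Real.dist_eq, abs_lt]
  constructor <;> [linarith; linarith]
end

section
/- (Nearby subsets failing the return-time LLT.) Let T be ergodic measure-preserving, (A_l) asymptotically rare with μ_{A_l}(μ(A_l)φ_{A_l} ≤ t) ⇒ F̃(t) for a distribution function F̃, and let (k_l) be integers with μ(A_l)k_l converging to a continuity point of F̃. Then the sets B_l := A_l ∩ {φ_{A_l} ≠ k_l} satisfy μ(B_l) ∼ μ(A_l) and μ_{B_l}(φ_{B_l} = k_l) = 0 for all l. -/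
open MeasureTheory ProbabilityTheory Filter Topology
open scoped ENNReal

section Helpers
open Set

variable {X : Type*} {T : X → X} {A : Set X} {x : X}

lemma hitTime_le {n : ℕ} (h1 : 1 ≤ n) (h2 : T^[n] x ∈ A) : hitTime T A x ≤ n :=
  sInf_le ⟨n, ⟨h1, h2⟩, rfl⟩

lemma one_le_hitTime : 1 ≤ hitTime T A x := by
  refine le_sInf ?_
  rintro b ⟨m, ⟨hm, -⟩, rfl⟩
  exact_mod_cast hm

lemma hitTime_spec {n : ℕ} (h : hitTime T A x = (n : ℕ∞)) :
    1 ≤ n ∧ T^[n] x ∈ A ∧ ∀ m : ℕ, 1 ≤ m → T^[m] x ∈ A → n ≤ m := by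
  set S : Set ℕ := {n : ℕ | 1 ≤ n ∧ T^[n] x ∈ A} with hS
  have hne : S.Nonempty := by
    by_contra hcon
    rw [Set.not_nonempty_iff_eq_empty] at hcon
    simp [hitTime, ← hS, hcon] at h
  have heq : hitTime T A x = ((sInf S : ℕ) : ℕ∞) := by
    refine le_antisymm (sInf_le ⟨_, Nat.sInf_mem hne, rfl⟩) (le_sInf ?_)
    rintro b ⟨m, hm, rfl⟩
    exact_mod_cast Nat.sInf_le hm
  have : sInf S = n := by
    rw [h] at heq; exact_mod_cast heq.symm
  subst this
  obtain ⟨h1, h2⟩ := Nat.sInf_mem hne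
  exact ⟨h1, h2, fun m hm hmA => Nat.sInf_le ⟨hm, hmA⟩⟩

lemma hitTime_eq_coe_iff {n : ℕ} :
    hitTime T A x = (n : ℕ∞) ↔
      (1 ≤ n ∧ T^[n] x ∈ A) ∧ ∀ m : ℕ, m < n → ¬(1 ≤ m ∧ T^[m] x ∈ A) := by
  constructor
  · intro h
    obtain ⟨h1, h2, h3⟩ := hitTime_spec h
    exact ⟨⟨h1, h2⟩, fun m hm ⟨hm1, hmA⟩ => absurd (h3 m hm1 hmA) (by omega)⟩
  · rintro ⟨⟨h1, h2⟩, h3⟩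
    refine le_antisymm (hitTime_le h1 h2) (le_sInf ?_)
    rintro b ⟨m, hm, rfl⟩
    have : n ≤ m := by by_contra hcon; exact h3 m (by omega) hm
    exact_mod_cast this

lemma hitTime_eq_top_iff :
    hitTime T A x = ⊤ ↔ ∀ n : ℕ, 1 ≤ n → T^[n] x ∉ A := by
  rw [hitTime, sInf_eq_top]
  constructor
  · intro h n h1 hA
    exact (WithTop.coe_ne_top) (h _ ⟨n, ⟨h1, hA⟩, rfl⟩)
  · rintro h b ⟨m, ⟨h1, hA⟩, rfl⟩
    exact absurd hA (h m h1)

lemma measurableSet_hitTime_eq [MeasurableSpace X] (hT : Measurable T)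
    (hA : MeasurableSet A) (c : ℕ∞) : MeasurableSet {x | hitTime T A x = c} := by
  have hE : ∀ n : ℕ, MeasurableSet {x | T^[n] x ∈ A} :=
    fun n => (hT.iterate n) hA
  induction c using ENat.recTopCoe with
  | top =>
    have : {x | hitTime T A x = ⊤} = ⋂ (n : ℕ) (_ : 1 ≤ n), {x | T^[n] x ∈ A}ᶜ := by
      ext x; simp [hitTime_eq_top_iff]
    rw [this]
    exact MeasurableSet.iInter fun n => MeasurableSet.iInter fun _ => (hE n).compl
  | coe n =>
    have : {x | hitTime T A x = (n : ℕ∞)} =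
        ({x | 1 ≤ n} ∩ {x | T^[n] x ∈ A}) ∩
          ⋂ (m : ℕ) (_ : m < n), {x | ¬(1 ≤ m ∧ T^[m] x ∈ A)} := by
      ext x; simp [hitTime_eq_coe_iff, and_assoc]
    rw [this]
    refine (MeasurableSet.inter ?_ (hE n)).inter
      (MeasurableSet.iInter fun m => MeasurableSet.iInter fun _ => ?_)
    · by_cases h : 1 ≤ n <;> simp [h]
    · by_cases h : 1 ≤ m
      · have : {x : X | ¬(1 ≤ m ∧ T^[m] x ∈ A)} = {x | T^[m] x ∈ A}ᶜ := by
          ext x; simp [h]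
        rw [this]; exact (hE m).compl
      · have : {x : X | ¬(1 ≤ m ∧ T^[m] x ∈ A)} = Set.univ := by
          ext x; simp [h]
        rw [this]; exact MeasurableSet.univ

lemma measurableSet_hitTime_mem [MeasurableSpace X] (hT : Measurable T)
    (hA : MeasurableSet A) (S : Set ℕ∞) : MeasurableSet {x | hitTime T A x ∈ S} := by
  have : {x | hitTime T A x ∈ S} = ⋃ c ∈ S, {x | hitTime T A x = c} := by
    ext x; simp
  rw [this]
  exact MeasurableSet.biUnion S.to_countable fun c _ => measurableSet_hitTime_eq hT hA c

/-- Key combinatorial fact: on `B = A ∩ {φ_A ≠ k}`, the hit time of `B` never equals `k`. -/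
lemma hitTime_inter_ne {k : ℕ} :
    (A ∩ {y | hitTime T A y ≠ (k : ℕ∞)}) ∩
      {x | hitTime T (A ∩ {y | hitTime T A y ≠ (k : ℕ∞)}) x = (k : ℕ∞)} = ∅ := by
  set B := A ∩ {y | hitTime T A y ≠ (k : ℕ∞)} with hB
  ext x
  simp only [Set.mem_inter_iff, Set.mem_setOf_eq, Set.mem_empty_iff_false, iff_false, not_and]
  rintro ⟨hxA, hxne⟩ hBk
  obtain ⟨hk1, hkB, hkmin⟩ := hitTime_spec hBk
  have hφA_le : hitTime T A x ≤ (k : ℕ∞) := hitTime_le hk1 hkB.1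
  have hφA_lt : hitTime T A x < (k : ℕ∞) := lt_of_le_of_ne hφA_le hxne
  obtain ⟨m, hm⟩ : ∃ m : ℕ, hitTime T A x = (m : ℕ∞) := by
    cases h : hitTime T A x with
    | top => rw [h] at hφA_lt; exact absurd hφA_lt (by simp)
    | coe m => exact ⟨m, rfl⟩
  obtain ⟨hm1, hmA, hmmin⟩ := hitTime_spec hm
  have hmk : m < k := by rw [hm] at hφA_lt; exact_mod_cast hφA_lt
  -- T^[m] x ∉ B, else hit time of B would be ≤ m < k
  have hmB : T^[m] x ∉ B := by
    intro hcon
    have h2 := hitTime_le (A := B) hm1 hcon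
    rw [hBk] at h2
    have : k ≤ m := by exact_mod_cast h2
    omega
  have hmne : hitTime T A (T^[m] x) = (k : ℕ∞) := by
    by_contra hne
    exact hmB ⟨hmA, hne⟩
  -- but T^[k-m] (T^[m] x) = T^[k] x ∈ A with 1 ≤ k - m < k
  have hiter : T^[k - m] (T^[m] x) ∈ A := by
    rw [← Function.iterate_add_apply]
    have : k - m + m = k := by omega
    rw [this]
    exact hkB.1
  obtain ⟨-, -, hmin'⟩ := hitTime_spec hmne
  have := hmin' (k - m) (by omega) hiter
  omega

end Helpers

/-- Nearby subsets failing the return-time LLT: if the normalized return times of `A l`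
converge in distribution to `F̃` and `μ(A l)·k l` converges to a continuity point of `F̃`,
then the sets `B l := A l ∩ {φ_{A l} ≠ k l}` satisfy `μ(B l) ∼ μ(A l)` while
`μ_{B l}(φ_{B l} = k l) = 0` for all `l`. -/
theorem stmt_11 {X : Type*} [MeasurableSpace X] {μ : Measure X} [IsProbabilityMeasure μ]
    {T : X → X} (hT : Ergodic T μ) {A : ℕ → Set X} (hmeas : ∀ l, MeasurableSet (A l))
    (hpos : ∀ l, 0 < μ (A l)) (hrare : Tendsto (fun l => μ (A l)) atTop (𝓝 0))
    {Ft : ℝ → ℝ} (hFt_mono : Monotone Ft) (hFt_one : Tendsto Ft atTop (𝓝 1))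
    (hcvg : ∀ t : ℝ, ContinuousAt Ft t →
      Tendsto (fun l =>
          ((μ[|A l]) {x | μ (A l) * ((hitTime T (A l) x : ℕ∞) : ℝ≥0∞) ≤ ENNReal.ofReal t}).toReal)
        atTop (𝓝 (Ft t)))
    {k : ℕ → ℕ} {t₀ : ℝ} (hcont : ContinuousAt Ft t₀)
    (hkt : Tendsto (fun l => (μ (A l)).toReal * (k l : ℝ)) atTop (𝓝 t₀)) :
    Tendsto (fun l =>
        (μ (A l ∩ {x | hitTime T (A l) x ≠ (k l : ℕ∞)})).toReal / (μ (A l)).toReal)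
      atTop (𝓝 1) ∧
    ∀ l : ℕ,
      (μ[|A l ∩ {x | hitTime T (A l) x ≠ (k l : ℕ∞)}])
        {x | hitTime T (A l ∩ {y | hitTime T (A l) y ≠ (k l : ℕ∞)}) x = (k l : ℕ∞)} = 0 := by
  have hTm : Measurable T := hT.toMeasurePreserving.measurable
  have hK : ∀ l, MeasurableSet {x | hitTime T (A l) x = ((k l : ℕ) : ℕ∞)} :=
    fun l => measurableSet_hitTime_eq hTm (hmeas l) _
  have hKc : ∀ l, MeasurableSet {x | hitTime T (A l) x ≠ ((k l : ℕ) : ℕ∞)} := by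
    intro l
    have : {x | hitTime T (A l) x ≠ ((k l : ℕ) : ℕ∞)}
        = {x | hitTime T (A l) x = ((k l : ℕ) : ℕ∞)}ᶜ := rfl
    rw [this]; exact (hK l).compl
  have hB : ∀ l, MeasurableSet (A l ∩ {x | hitTime T (A l) x ≠ ((k l : ℕ) : ℕ∞)}) :=
    fun l => (hmeas l).inter (hKc l)
  have ha0 : ∀ l, μ (A l) ≠ 0 := fun l => (hpos l).ne'
  have haT : ∀ l, μ (A l) ≠ ∞ := fun l => measure_ne_top μ _
  have hatR : ∀ l, 0 < (μ (A l)).toReal := fun l => ENNReal.toReal_pos (ha0 l) (haT l)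
  -- Step A : conditional measure of {φ = k l} tends to 0
  set f : ℕ → ℝ := fun l =>
    ((μ[|A l]) {x | hitTime T (A l) x = ((k l : ℕ) : ℕ∞)}).toReal with hf
  have hf_nonneg : ∀ l, 0 ≤ f l := fun l => ENNReal.toReal_nonneg
  have hf0 : Tendsto f atTop (𝓝 0) := by
    rw [NormedAddCommGroup.tendsto_nhds_zero]
    intro ε hε
    obtain ⟨δ, hδ, hδε⟩ := Metric.continuousAt_iff.1 hcont (ε / 3) (by positivity)
    have hD : {t : ℝ | ¬ContinuousAt Ft t}.Countable := hFt_mono.countable_not_continuousAt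
    have hdense : Dense {t : ℝ | ¬ContinuousAt Ft t}ᶜ := hD.dense_compl ℝ
    obtain ⟨t₁, ht₁c, ht₁⟩ := hdense.exists_between (show t₀ - δ < t₀ by linarith)
    obtain ⟨t₂, ht₂c, ht₂⟩ := hdense.exists_between (show t₀ < t₀ + δ by linarith)
    have hc1 : ContinuousAt Ft t₁ := not_not.1 ht₁c
    have hc2 : ContinuousAt Ft t₂ := not_not.1 ht₂c
    have hbound : Ft t₂ - Ft t₁ < ε := by
      have h1 := hδε (show dist t₁ t₀ < δ by
        rw [Real.dist_eq, abs_lt]; constructor <;> [linarith [ht₁.1]; linarith [ht₁.2]])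
      have h2 := hδε (show dist t₂ t₀ < δ by
        rw [Real.dist_eq, abs_lt]; constructor <;> [linarith [ht₂.1]; linarith [ht₂.2]])
      rw [Real.dist_eq, abs_lt] at h1 h2
      linarith [h1.1, h1.2, h2.1, h2.2]
    have hlim : Tendsto (fun l =>
        ((μ[|A l]) {x | μ (A l) * ((hitTime T (A l) x : ℕ∞) : ℝ≥0∞) ≤ ENNReal.ofReal t₂}).toReal
        - ((μ[|A l]) {x | μ (A l) * ((hitTime T (A l) x : ℕ∞) : ℝ≥0∞) ≤ ENNReal.ofReal t₁}).toReal)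
        atTop (𝓝 (Ft t₂ - Ft t₁)) := (hcvg t₂ hc2).sub (hcvg t₁ hc1)
    have hev1 := hlim.eventually_lt_const hbound
    have hev2 : ∀ᶠ l in atTop, (μ (A l)).toReal * (k l : ℝ) ∈ Set.Ioo t₁ t₂ :=
      hkt (Ioo_mem_nhds ht₁.2 ht₂.1)
    filter_upwards [hev1, hev2] with l h1 h2
    rw [Real.norm_of_nonneg (hf_nonneg l)]
    refine lt_of_le_of_lt ?_ h1
    -- the key measure inequality
    haveI : IsProbabilityMeasure (μ[|A l]) := cond_isProbabilityMeasure (ha0 l)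
    set ν := μ[|A l]
    set K := {x | hitTime T (A l) x = ((k l : ℕ) : ℕ∞)} with hKdef
    set S₁ := {x | μ (A l) * ((hitTime T (A l) x : ℕ∞) : ℝ≥0∞) ≤ ENNReal.ofReal t₁} with hS₁
    set S₂ := {x | μ (A l) * ((hitTime T (A l) x : ℕ∞) : ℝ≥0∞) ≤ ENNReal.ofReal t₂} with hS₂
    have hmulcast : μ (A l) * ((((k l : ℕ) : ℕ∞)) : ℝ≥0∞)
        = ENNReal.ofReal ((μ (A l)).toReal * (k l : ℝ)) := by
      rw [ENNReal.ofReal_mul ENNReal.toReal_nonneg, ENNReal.ofReal_toReal (haT l),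
        ENNReal.ofReal_natCast, ENat.toENNReal_coe]
    have hKS₂ : K ⊆ S₂ := by
      intro x hx
      simp only [hKdef, Set.mem_setOf_eq] at hx
      simp only [hS₂, Set.mem_setOf_eq, hx, hmulcast]
      exact ENNReal.ofReal_le_ofReal h2.2.le
    have hS₁S₂ : S₁ ⊆ S₂ := fun x hx =>
      le_trans hx (ENNReal.ofReal_le_ofReal (by linarith [h2.1, h2.2] : t₁ ≤ t₂))
    have hdisj : Disjoint K S₁ := by
      rw [Set.disjoint_left]
      intro x hx hx1
      simp only [hKdef, Set.mem_setOf_eq] at hx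
      simp only [hS₁, Set.mem_setOf_eq, hx, hmulcast] at hx1
      have hk1 : 1 ≤ k l := by
        have := one_le_hitTime (T := T) (A := A l) (x := x)
        rw [hx] at this
        exact_mod_cast this
      have hposkl : 0 < (μ (A l)).toReal * (k l : ℝ) := by
        have : (0:ℝ) < (k l : ℝ) := by exact_mod_cast hk1
        exact mul_pos (hatR l) this
      have := lt_of_lt_of_le ((ENNReal.ofReal_lt_ofReal_iff hposkl).2 h2.1) hx1
      exact lt_irrefl _ this
    have hS₁m : MeasurableSet S₁ := by
      have : S₁ = {x | hitTime T (A l) x ∈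
          {n : ℕ∞ | μ (A l) * (n : ℝ≥0∞) ≤ ENNReal.ofReal t₁}} := rfl
      rw [this]; exact measurableSet_hitTime_mem hTm (hmeas l) _
    have hunion : ν K + ν S₁ ≤ ν S₂ := by
      rw [← measure_union hdisj hS₁m]
      exact measure_mono (Set.union_subset hKS₂ hS₁S₂)
    have hfin : ∀ s : Set X, ν s ≠ ∞ := fun s => measure_ne_top ν s
    have := ENNReal.toReal_mono (hfin S₂) hunion
    rw [ENNReal.toReal_add (hfin K) (hfin S₁)] at this
    simp only [hf]
    linarith
  -- Step B : ratio equals 1 - f l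
  have hratio : ∀ l,
      (μ (A l ∩ {x | hitTime T (A l) x ≠ ((k l : ℕ) : ℕ∞)})).toReal / (μ (A l)).toReal
        = 1 - f l := by
    intro l
    set K := {x | hitTime T (A l) x = ((k l : ℕ) : ℕ∞)}
    have hBeq : A l ∩ {x | hitTime T (A l) x ≠ ((k l : ℕ) : ℕ∞)} = A l \ (A l ∩ K) := by
      ext x
      simp only [Set.mem_inter_iff, Set.mem_setOf_eq, Set.mem_diff, not_and]
      tauto
    have hsub : μ (A l ∩ {x | hitTime T (A l) x ≠ ((k l : ℕ) : ℕ∞)})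
        = μ (A l) - μ (A l ∩ K) := by
      rw [hBeq]
      exact measure_diff Set.inter_subset_left ((hmeas l).inter (hK l)).nullMeasurableSet
        (measure_ne_top μ _)
    have hle : μ (A l ∩ K) ≤ μ (A l) := measure_mono Set.inter_subset_left
    have hcond : f l = (μ (A l ∩ K)).toReal / (μ (A l)).toReal := by
      simp only [hf, cond_apply (hmeas l) μ, ENNReal.toReal_mul, ENNReal.toReal_inv]
      ring
    rw [hsub, ENNReal.toReal_sub_of_le hle (haT l), hcond, sub_div,
      div_self (hatR l).ne']
  have : Tendsto (fun l => 1 - f l) atTop (𝓝 (1 - 0)) := tendsto_const_nhds.sub hf0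
  rw [sub_zero] at this
  refine ⟨this.congr (fun l => (hratio l).symm), fun l => ?_⟩
  -- Part 2
  rw [cond_apply (hB l) μ]
  have := hitTime_inter_ne (T := T) (A := A l) (k := k l)
  rw [this]
  simp
end
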